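/- Let x be a nilpotent endomorphism of a finite-dimensional vector space V and ℓ ≥ 1. Then for every k ≥ 1, the map x^ℓ induces a linear isomorphism ker x^{ℓ+k}/ker x^ℓ ≅ ker((x restricted to im x^ℓ)^k). In particular, the Jordan type of x restricted to im x^ℓ is the Young diagram obtained from the Jordan type of x by deleting its first ℓ columns. -/
import Mathlib


open Module

private lemma kerpow_mono {K V : Type*} [Field K] [AddCommGroup V] [Module K V]
    (x : V →ₗ[K] V) {m n : ℕ} (h : m ≤ n) :
    LinearMap.ker (x ^ m) ≤ LinearMap.ker (x ^ n) := by
  intro v hv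
  rw [LinearMap.mem_ker] at hv ⊢
  rw [← Nat.sub_add_cancel h, pow_add, Module.End.mul_apply, hv, map_zero]

private lemma dim_eq {K V : Type*} [Field K] [AddCommGroup V] [Module K V]
    [FiniteDimensional K V] (x : V →ₗ[K] V) (ℓ k : ℕ) :
    finrank K ↥(LinearMap.ker (x ^ (ℓ + k))) - finrank K ↥(LinearMap.ker (x ^ ℓ))
      = finrank K ↥(LinearMap.range (x ^ ℓ) ⊓ LinearMap.ker (x ^ k)) := by
  set p := LinearMap.ker (x ^ (ℓ + k))
  have hmap : p.map (x ^ ℓ) = LinearMap.range (x ^ ℓ) ⊓ LinearMap.ker (x ^ k) := by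
    apply le_antisymm
    · rintro w ⟨v, hv, rfl⟩
      have hv' : (x ^ (ℓ + k)) v = 0 := hv
      refine ⟨⟨v, rfl⟩, ?_⟩
      show (x ^ k) ((x ^ ℓ) v) = 0
      rw [← Module.End.mul_apply, ← pow_add, add_comm k ℓ]
      exact hv'
    · rintro w ⟨⟨v, rfl⟩, hw⟩
      have hw' : (x ^ k) ((x ^ ℓ) v) = 0 := hw
      refine ⟨v, ?_, rfl⟩
      show (x ^ (ℓ + k)) v = 0
      rw [add_comm, pow_add, Module.End.mul_apply]
      exact hw'
  have hle : LinearMap.ker (x ^ ℓ) ≤ p := kerpow_mono x (Nat.le_add_right ℓ k)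
  have e1 : finrank K ↥(LinearMap.ker ((x ^ ℓ).domRestrict p))
      = finrank K ↥(LinearMap.ker (x ^ ℓ)) := by
    have hker : LinearMap.ker ((x ^ ℓ).domRestrict p)
        = (LinearMap.ker (x ^ ℓ)).comap p.subtype := rfl
    rw [hker]
    exact (Submodule.comapSubtypeEquivOfLe hle).finrank_eq
  have e2 := LinearMap.finrank_range_add_finrank_ker ((x ^ ℓ).domRestrict p)
  rw [LinearMap.range_domRestrict, hmap, e1] at e2
  omega

/-- Let `x` be a nilpotent endomorphism of a finite-dimensional space `V` and `ℓ ≥ 1`.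
For every `k ≥ 1`, the map `x^ℓ` induces a linear isomorphism
`ker x^{ℓ+k}/ker x^ℓ ≅ ker((x|_{im x^ℓ})^k)`, where the kernel of the `k`-th power of the
restriction of `x` to `im x^ℓ` is `im x^ℓ ⊓ ker x^k`.  In particular the column lengths of
the Jordan type of `x|_{im x^ℓ}` are those of `x` with the first `ℓ` columns deleted. -/
theorem stmt7 {K V : Type*} [Field K] [AddCommGroup V] [Module K V] [FiniteDimensional K V]
    (x : V →ₗ[K] V) (hnil : IsNilpotent x) (ℓ : ℕ) (hℓ : 1 ≤ ℓ) :
    ∀ k : ℕ, 1 ≤ k →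
      -- `x^ℓ` maps `ker x^{ℓ+k}` into `ker((x|_{im x^ℓ})^k) = im x^ℓ ⊓ ker x^k` …
      (∀ v ∈ LinearMap.ker (x ^ (ℓ + k)),
        (x ^ ℓ) v ∈ LinearMap.range (x ^ ℓ) ⊓ LinearMap.ker (x ^ k)) ∧
      -- … surjectively, …
      (∀ w ∈ LinearMap.range (x ^ ℓ) ⊓ LinearMap.ker (x ^ k),
        ∃ v ∈ LinearMap.ker (x ^ (ℓ + k)), (x ^ ℓ) v = w) ∧
      -- … with kernel exactly `ker x^ℓ`, …
      (∀ v ∈ LinearMap.ker (x ^ (ℓ + k)), (x ^ ℓ) v = 0 → v ∈ LinearMap.ker (x ^ ℓ)) ∧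
      -- … so that the dimensions match:
      (finrank K ↥(LinearMap.ker (x ^ (ℓ + k))) - finrank K ↥(LinearMap.ker (x ^ ℓ))
        = finrank K ↥(LinearMap.range (x ^ ℓ) ⊓ LinearMap.ker (x ^ k))) ∧
      -- in particular, the columns of the Jordan type of `x|_{im x^ℓ}` are obtained from
      -- those of `x` by deleting the first `ℓ` columns:
      (finrank K ↥(LinearMap.range (x ^ ℓ) ⊓ LinearMap.ker (x ^ k))
          - finrank K ↥(LinearMap.range (x ^ ℓ) ⊓ LinearMap.ker (x ^ (k - 1)))
        = finrank K ↥(LinearMap.ker (x ^ (ℓ + k)))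
          - finrank K ↥(LinearMap.ker (x ^ (ℓ + k - 1)))) := by
  intro k hk
  refine ⟨?_, ?_, ?_, dim_eq x ℓ k, ?_⟩
  · intro v hv
    refine ⟨⟨v, rfl⟩, ?_⟩
    show (x ^ k) ((x ^ ℓ) v) = 0
    rw [← Module.End.mul_apply, ← pow_add, add_comm k ℓ]
    exact hv
  · rintro w ⟨⟨v, rfl⟩, hw⟩
    have hw' : (x ^ k) ((x ^ ℓ) v) = 0 := hw
    refine ⟨v, ?_, rfl⟩
    show (x ^ (ℓ + k)) v = 0
    rw [add_comm, pow_add, Module.End.mul_apply]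
    exact hw'
  · intro v _ hv
    exact hv
  · have h2 := dim_eq x ℓ (k - 1)
    have hk' : ℓ + (k - 1) = ℓ + k - 1 := by omega
    rw [hk'] at h2
    have m1 : finrank K ↥(LinearMap.ker (x ^ ℓ))
        ≤ finrank K ↥(LinearMap.ker (x ^ (ℓ + k - 1))) :=
      Submodule.finrank_mono (kerpow_mono x (by omega))
    have m2 : finrank K ↥(LinearMap.ker (x ^ (ℓ + k - 1)))
        ≤ finrank K ↥(LinearMap.ker (x ^ (ℓ + k))) :=
      Submodule.finrank_mono (kerpow_mono x (by omega))
    have h1 := dim_eq x ℓ k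
    omega
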